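/- Let ρ, ρ̂ ∈ (0,1) with ρ̂ < ρ, let C, Ĉ > 0 and α, β, α̂, β̂ ∈ ℝ. Let U, Û be locally finite Borel measures on [0,∞) and L, L̂ be slowly varying at 0⁺ with U([0,x])/(x^ρ L(x)) → 1 and Û([0,x])/(x^{ρ̂} L̂(x)) → 1 as x → 0⁺. Define Ψ(x) := C ∫_{[0,x]} e^{(α−β)y} U(dy) and Ψ̂(x) := Ĉ ∫_{[0,x]} e^{(α̂−β̂)y} Û(dy). Then (Ψ(x) − Ψ̂(x))/(x^{ρ̂} L̂(x)) → −Ĉ as x → 0⁺. -/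

import Mathlib

open Filter Topology MeasureTheory Set

/-- A function `L : (0,∞) → (0,∞)` is slowly varying at `0⁺` if for every `l > 0`,
`L(l·x)/L(x) → 1` as `x → 0⁺`. -/
def SlowlyVaryingAtZero (L : ℝ → ℝ) : Prop :=
  ∀ l : ℝ, 0 < l → Tendsto (fun x : ℝ => L (l * x) / L x) (𝓝[>] 0) (𝓝 1)

lemma tendsto_half_nhdsWithin_aux :
    Tendsto (fun x : ℝ => x / 2) (𝓝[>] (0:ℝ)) (𝓝[>] (0:ℝ)) := by
  apply tendsto_nhdsWithin_of_tendsto_nhds_of_eventually_within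
  · have h : Tendsto (fun x : ℝ => x / 2) (𝓝 (0:ℝ)) (𝓝 ((0:ℝ)/2)) :=
      tendsto_id.div_const (2:ℝ)
    simpa using h.mono_left nhdsWithin_le_nhds
  · filter_upwards [self_mem_nhdsWithin] with x hx
    exact div_pos hx (by norm_num : (0:ℝ) < 2)

/-- If f(x/2)/f(x) → a < b ← g(x/2)/g(x) with f, g monotone and eventually positive,
then f/g → 0 at 0⁺. -/
lemma ratio_tendsto_zero_aux (f g : ℝ → ℝ) (hf : Monotone f) (hg : Monotone g)
    (a b : ℝ) (ha0 : 0 < a) (hab : a < b)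
    (hfa : Tendsto (fun x => f (x/2) / f x) (𝓝[>] (0:ℝ)) (𝓝 a))
    (hgb : Tendsto (fun x => g (x/2) / g x) (𝓝[>] (0:ℝ)) (𝓝 b))
    (hfpos : ∀ᶠ x in 𝓝[>] (0:ℝ), 0 < f x)
    (hgpos : ∀ᶠ x in 𝓝[>] (0:ℝ), 0 < g x) :
    Tendsto (fun x => f x / g x) (𝓝[>] (0:ℝ)) (𝓝 0) := by
  set q' : ℝ := a + (b - a)/3 with hq'def
  set q'' : ℝ := b - (b - a)/3 with hq''def
  have haq' : a < q' := by simp only [hq'def]; linarith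
  have hq'q'' : q' < q'' := by simp only [hq'def, hq''def]; linarith
  have hq''b : q'' < b := by simp only [hq''def]; linarith
  have hq'pos : 0 < q' := lt_trans ha0 haq'
  have hq''pos : 0 < q'' := lt_trans hq'pos hq'q''
  have h1 : ∀ᶠ x in 𝓝[>] (0:ℝ), f (x/2) / f x < q' :=
    hfa.eventually_lt_const haq'
  have h2 : ∀ᶠ x in 𝓝[>] (0:ℝ), q'' < g (x/2) / g x :=
    hgb.eventually_const_lt hq''b
  have hev : ∀ᶠ x in 𝓝[>] (0:ℝ),
      0 < f x ∧ 0 < g x ∧ f (x/2) ≤ q' * f x ∧ q'' * g x ≤ g (x/2) := by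
    filter_upwards [hfpos, hgpos, h1, h2] with x hf0 hg0 h1' h2'
    exact ⟨hf0, hg0, ((div_lt_iff₀ hf0).mp h1').le, ((lt_div_iff₀ hg0).mp h2').le⟩
  obtain ⟨δ, hδ, hδsub⟩ := mem_nhdsGT_iff_exists_Ioo_subset.mp hev
  rw [Set.mem_Ioi] at hδ
  set x₀ : ℝ := δ / 2 with hx₀def
  have hx₀pos : 0 < x₀ := by positivity
  have hpow1 : ∀ n : ℕ, (1:ℝ) ≤ 2^n := fun n => one_le_pow₀ one_le_two
  have hx₀le : ∀ n : ℕ, x₀ / 2^n ≤ x₀ := by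
    intro n
    calc x₀ / 2^n ≤ x₀ / 1 := div_le_div_of_nonneg_left hx₀pos.le one_pos (hpow1 n)
      _ = x₀ := div_one x₀
  have hx₀mem : ∀ n : ℕ, x₀ / 2^n ∈ Set.Ioo (0:ℝ) δ := by
    intro n
    exact ⟨by positivity, lt_of_le_of_lt (hx₀le n) (half_lt_self hδ)⟩
  have key : ∀ n : ℕ, f (x₀ / 2^n) ≤ q'^n * f x₀ ∧ q''^n * g x₀ ≤ g (x₀ / 2^n) := by
    intro n
    induction n with
    | zero => simp
    | succ n ih =>
      obtain ⟨hP1, hP2, hP3, hP4⟩ := hδsub (hx₀mem n)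
      have e : x₀ / 2^(n+1) = (x₀/2^n)/2 := by ring
      constructor
      · rw [e]
        calc f ((x₀/2^n)/2) ≤ q' * f (x₀/2^n) := hP3
          _ ≤ q' * (q'^n * f x₀) := by nlinarith [ih.1]
          _ = q'^(n+1) * f x₀ := by ring
      · rw [e]
        calc q''^(n+1) * g x₀ = q'' * (q''^n * g x₀) := by ring
          _ ≤ q'' * g (x₀/2^n) := by nlinarith [ih.2]
          _ ≤ g ((x₀/2^n)/2) := hP4
  have hfx₀pos : 0 < f x₀ := by
    have := (hδsub (hx₀mem 0)).1; simpa using this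
  have hgx₀pos : 0 < g x₀ := by
    have := (hδsub (hx₀mem 0)).2.1; simpa using this
  set r : ℝ := q' / q'' with hrdef
  have hr0 : 0 ≤ r := by positivity
  have hr1 : r < 1 := (div_lt_one hq''pos).mpr hq'q''
  set K : ℝ := f x₀ / (q'' * g x₀) with hKdef
  have hK0 : 0 < K := by positivity
  rw [NormedAddCommGroup.tendsto_nhds_zero]
  intro ε hε
  have htail : Tendsto (fun n : ℕ => K * r ^ n) atTop (𝓝 0) := by
    have := tendsto_pow_atTop_nhds_zero_of_lt_one hr0 hr1
    simpa using this.const_mul K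
  obtain ⟨N, hN⟩ := (htail.eventually (gt_mem_nhds hε)).exists
  have hbN : (0:ℝ) < x₀ / 2^N := by positivity
  filter_upwards [Ioo_mem_nhdsGT_of_mem (Set.mem_Ico.mpr ⟨le_refl (0:ℝ), hbN⟩)]
    with x hx
  obtain ⟨hx0, hxN⟩ := hx
  have hex : ∃ m : ℕ, x₀ / 2^m < x := by
    obtain ⟨m, hm⟩ := pow_unbounded_of_one_lt (x₀ / x) (one_lt_two (α := ℝ))
    exact ⟨m, by rwa [div_lt_iff₀ (by positivity), ← div_lt_iff₀' hx0]⟩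
  have hm : x₀ / 2^(Nat.find hex) < x := Nat.find_spec hex
  have hm0 : Nat.find hex ≠ 0 := by
    intro h
    rw [h] at hm
    simp only [pow_zero, div_one] at hm
    have hxx₀ : x < x₀ := lt_of_lt_of_le hxN (hx₀le N)
    linarith
  obtain ⟨n, hn⟩ : ∃ n, Nat.find hex = n + 1 := Nat.exists_eq_succ_of_ne_zero hm0
  rw [hn] at hm
  have hxn : x ≤ x₀ / 2^n := by
    have := Nat.find_min hex (m := n) (by rw [hn]; exact Nat.lt_succ_self n)
    exact le_of_not_gt this
  have hNn : N ≤ n := by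
    by_contra h
    push_neg at h
    have h1 : (2:ℝ)^(n+1) ≤ 2^N := pow_le_pow_right₀ one_le_two h
    have h2 : x₀ / 2^N ≤ x₀ / 2^(n+1) :=
      div_le_div_of_nonneg_left hx₀pos.le (by positivity) h1
    linarith
  have hxmem : x ∈ Set.Ioo (0:ℝ) δ :=
    ⟨hx0, lt_trans (lt_of_lt_of_le hxN (hx₀le N)) (half_lt_self hδ)⟩
  have hfx : 0 < f x := (hδsub hxmem).1
  have hgx : 0 < g x := (hδsub hxmem).2.1
  have hb1 : f x ≤ q'^n * f x₀ := le_trans (hf hxn) (key n).1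
  have hb2 : q''^(n+1) * g x₀ ≤ g x := le_trans (key (n+1)).2 (hg hm.le)
  rw [Real.norm_eq_abs, abs_of_pos (div_pos hfx hgx)]
  calc f x / g x ≤ (q'^n * f x₀) / (q''^(n+1) * g x₀) :=
        div_le_div₀ (by positivity) hb1 (by positivity) hb2
    _ = K * r^n := by
        rw [hKdef, hrdef, div_pow]
        field_simp
        ring
    _ ≤ K * r^N := by
        have := pow_le_pow_of_le_one hr0 hr1.le hNn
        nlinarith
    _ < ε := hN

/-- The exponentially weighted integral is asymptotically the measure of `[0,x]`. -/
lemma integral_ratio_tendsto_one_aux (ν : Measure ℝ) [IsLocallyFiniteMeasure ν] (m : ℝ)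
    (hpos : ∀ᶠ x in 𝓝[>] (0:ℝ), 0 < (ν (Set.Icc 0 x)).toReal) :
    Tendsto (fun x : ℝ =>
      (∫ y in Set.Icc 0 x, Real.exp (m * y) ∂ν) / (ν (Set.Icc 0 x)).toReal)
      (𝓝[>] (0:ℝ)) (𝓝 1) := by
  have hlim : Tendsto (fun x : ℝ => Real.exp (|m| * x)) (𝓝[>] (0:ℝ)) (𝓝 1) := by
    have h : Tendsto (fun x : ℝ => Real.exp (|m| * x)) (𝓝 0) (𝓝 (Real.exp (|m| * 0))) :=
      (Real.continuous_exp.comp (continuous_const.mul continuous_id)).tendsto 0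
    simpa using h.mono_left nhdsWithin_le_nhds
  have hlim' : Tendsto (fun x : ℝ => Real.exp (-(|m| * x))) (𝓝[>] (0:ℝ)) (𝓝 1) := by
    have h : Tendsto (fun x : ℝ => Real.exp (-(|m| * x))) (𝓝 0) (𝓝 (Real.exp (-(|m| * 0)))) :=
      (Real.continuous_exp.comp (continuous_const.mul continuous_id).neg).tendsto 0
    simpa using h.mono_left nhdsWithin_le_nhds
  apply tendsto_of_tendsto_of_tendsto_of_le_of_le' hlim' hlim
  · filter_upwards [hpos, self_mem_nhdsWithin] with x hF hx
    rw [Set.mem_Ioi] at hx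
    have hcont : Continuous (fun y : ℝ => Real.exp (m * y)) :=
      Real.continuous_exp.comp (continuous_const.mul continuous_id)
    have hint : IntegrableOn (fun y : ℝ => Real.exp (m * y)) (Set.Icc 0 x) ν :=
      hcont.integrableOn_Icc
    have hclb : IntegrableOn (fun _ : ℝ => Real.exp (-(|m| * x))) (Set.Icc 0 x) ν :=
      integrableOn_const isCompact_Icc.measure_lt_top.ne
    have hle : ∫ y in Set.Icc 0 x, Real.exp (-(|m| * x)) ∂ν ≤
        ∫ y in Set.Icc 0 x, Real.exp (m * y) ∂ν := by
      apply setIntegral_mono_on hclb hint measurableSet_Icc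
      intro y hy
      apply Real.exp_le_exp.mpr
      have h1 : -(|m| * x) ≤ -(|m| * y) := by nlinarith [hy.1, hy.2, abs_nonneg m]
      have h2 : -(|m| * y) ≤ m * y := by nlinarith [neg_abs_le m, hy.1]
      linarith
    rw [setIntegral_const] at hle
    rw [le_div_iff₀ hF]
    calc Real.exp (-(|m| * x)) * (ν (Set.Icc 0 x)).toReal
        = (ν (Set.Icc 0 x)).toReal • Real.exp (-(|m| * x)) := by
          rw [smul_eq_mul]; ring
      _ ≤ _ := hle
  · filter_upwards [hpos, self_mem_nhdsWithin] with x hF hx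
    rw [Set.mem_Ioi] at hx
    have hcont : Continuous (fun y : ℝ => Real.exp (m * y)) :=
      Real.continuous_exp.comp (continuous_const.mul continuous_id)
    have hint : IntegrableOn (fun y : ℝ => Real.exp (m * y)) (Set.Icc 0 x) ν :=
      hcont.integrableOn_Icc
    have hcub : IntegrableOn (fun _ : ℝ => Real.exp (|m| * x)) (Set.Icc 0 x) ν :=
      integrableOn_const isCompact_Icc.measure_lt_top.ne
    have hle : ∫ y in Set.Icc 0 x, Real.exp (m * y) ∂ν ≤
        ∫ y in Set.Icc 0 x, Real.exp (|m| * x) ∂ν := by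
      apply setIntegral_mono_on hint hcub measurableSet_Icc
      intro y hy
      apply Real.exp_le_exp.mpr
      have h1 : m * y ≤ |m| * y := by nlinarith [le_abs_self m, hy.1]
      have h2 : |m| * y ≤ |m| * x := by nlinarith [hy.2, abs_nonneg m]
      linarith
    rw [setIntegral_const] at hle
    rw [div_le_iff₀ hF]
    calc ∫ y in Set.Icc 0 x, Real.exp (m * y) ∂ν
        ≤ (ν (Set.Icc 0 x)).toReal • Real.exp (|m| * x) := hle
      _ = Real.exp (|m| * x) * (ν (Set.Icc 0 x)).toReal := by
          rw [smul_eq_mul]; ring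

/-- Half-ratio asymptotics from regular variation. -/
lemma half_ratio_tendsto_aux (f L : ℝ → ℝ) (rho : ℝ)
    (hLpos : ∀ x : ℝ, 0 < x → 0 < L x)
    (hLsv : SlowlyVaryingAtZero L)
    (hU : Tendsto (fun x : ℝ => f x / (x ^ rho * L x)) (𝓝[>] 0) (𝓝 1))
    (hfpos : ∀ᶠ x in 𝓝[>] (0:ℝ), 0 < f x) :
    Tendsto (fun x : ℝ => f (x/2) / f x) (𝓝[>] (0:ℝ)) (𝓝 ((2:ℝ)⁻¹ ^ rho)) := by
  have hA : Tendsto (fun x : ℝ => f (x/2) / ((x/2) ^ rho * L (x/2))) (𝓝[>] (0:ℝ)) (𝓝 1) :=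
    hU.comp tendsto_half_nhdsWithin_aux
  have hAinv : Tendsto (fun x : ℝ => (f x / (x ^ rho * L x))⁻¹) (𝓝[>] (0:ℝ)) (𝓝 1) := by
    simpa using hU.inv₀ one_ne_zero
  have hL2 : Tendsto (fun x : ℝ => L (x/2) / L x) (𝓝[>] (0:ℝ)) (𝓝 1) := by
    have := hLsv 2⁻¹ (by norm_num)
    simpa [inv_mul_eq_div] using this
  have hmain : Tendsto (fun x : ℝ =>
      (f (x/2) / ((x/2) ^ rho * L (x/2))) * (f x / (x ^ rho * L x))⁻¹ *
        ((2:ℝ)⁻¹ ^ rho * (L (x/2) / L x)))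
      (𝓝[>] (0:ℝ)) (𝓝 (1 * 1 * ((2:ℝ)⁻¹ ^ rho * 1))) :=
    (hA.mul hAinv).mul (tendsto_const_nhds.mul hL2)
  rw [one_mul, one_mul, mul_one] at hmain
  apply hmain.congr'
  filter_upwards [hfpos, self_mem_nhdsWithin] with x hfx hx
  rw [Set.mem_Ioi] at hx
  have hx2 : (0:ℝ) < x / 2 := by positivity
  have hrw : (x/2) ^ rho = x ^ rho * (2:ℝ)⁻¹ ^ rho := by
    rw [div_eq_mul_inv, Real.mul_rpow hx.le (by norm_num)]
  have hc : (0:ℝ) < (2:ℝ)⁻¹ ^ rho := Real.rpow_pos_of_pos (by norm_num) rho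
  have hxr : (0:ℝ) < x ^ rho := Real.rpow_pos_of_pos hx rho
  have hL1 := hLpos x hx
  have hL2' := hLpos _ hx2
  rw [hrw]
  field_simp

/-- second limit case of Lemma 4.1 of the paper. If `ρ̂ < ρ` then
`(Ψ(x) − Ψ̂(x))/(x^ρ̂ L̂(x)) → −Ĉ` as `x → 0⁺`. -/
theorem Psi_diff_tendsto_neg_Ch_of_rhoh_lt_rho
    (rho rhoh : ℝ) (hrho : rho ∈ Set.Ioo (0:ℝ) 1) (hrhoh : rhoh ∈ Set.Ioo (0:ℝ) 1)
    (hlt : rhoh < rho)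
    (C Ch : ℝ) (hC : 0 < C) (hCh : 0 < Ch)
    (alpha beta alphah betah : ℝ)
    (U Uh : Measure ℝ) [IsLocallyFiniteMeasure U] [IsLocallyFiniteMeasure Uh]
    (hU0 : U (Set.Iio 0) = 0) (hUh0 : Uh (Set.Iio 0) = 0)
    (L Lh : ℝ → ℝ)
    (hLpos : ∀ x : ℝ, 0 < x → 0 < L x) (hLhpos : ∀ x : ℝ, 0 < x → 0 < Lh x)
    (hLsv : SlowlyVaryingAtZero L) (hLhsv : SlowlyVaryingAtZero Lh)
    (hU : Tendsto (fun x : ℝ => (U (Set.Icc 0 x)).toReal / (x ^ rho * L x))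
      (𝓝[>] 0) (𝓝 1))
    (hUh : Tendsto (fun x : ℝ => (Uh (Set.Icc 0 x)).toReal / (x ^ rhoh * Lh x))
      (𝓝[>] 0) (𝓝 1))
    (Psi Psih : ℝ → ℝ)
    (hPsi : ∀ x : ℝ, Psi x = C * ∫ y in Set.Icc 0 x, Real.exp ((alpha - beta) * y) ∂U)
    (hPsih : ∀ x : ℝ,
      Psih x = Ch * ∫ y in Set.Icc 0 x, Real.exp ((alphah - betah) * y) ∂Uh) :
    Tendsto (fun x : ℝ => (Psi x - Psih x) / (x ^ rhoh * Lh x)) (𝓝[>] 0) (𝓝 (-Ch)) := by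
  set f : ℝ → ℝ := fun x => (U (Set.Icc 0 x)).toReal with hfdef
  set g : ℝ → ℝ := fun x => (Uh (Set.Icc 0 x)).toReal with hgdef
  have hfmono : Monotone f := by
    intro x y hxy
    exact ENNReal.toReal_mono (isCompact_Icc.measure_lt_top).ne
      (measure_mono (Set.Icc_subset_Icc le_rfl hxy))
  have hgmono : Monotone g := by
    intro x y hxy
    exact ENNReal.toReal_mono (isCompact_Icc.measure_lt_top).ne
      (measure_mono (Set.Icc_subset_Icc le_rfl hxy))
  have hDpos : ∀ x : ℝ, 0 < x → 0 < x ^ rho * L x := fun x hx =>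
    mul_pos (Real.rpow_pos_of_pos hx rho) (hLpos x hx)
  have hDhpos : ∀ x : ℝ, 0 < x → 0 < x ^ rhoh * Lh x := fun x hx =>
    mul_pos (Real.rpow_pos_of_pos hx rhoh) (hLhpos x hx)
  have hfpos : ∀ᶠ x in 𝓝[>] (0:ℝ), 0 < f x := by
    filter_upwards [hU.eventually_const_lt (by norm_num : (1:ℝ)/2 < 1),
      self_mem_nhdsWithin] with x h1 hx
    rw [Set.mem_Ioi] at hx
    have hd := hDpos x hx
    have h2 := (lt_div_iff₀ hd).mp h1
    nlinarith
  have hgpos : ∀ᶠ x in 𝓝[>] (0:ℝ), 0 < g x := by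
    filter_upwards [hUh.eventually_const_lt (by norm_num : (1:ℝ)/2 < 1),
      self_mem_nhdsWithin] with x h1 hx
    rw [Set.mem_Ioi] at hx
    have hd := hDhpos x hx
    have h2 := (lt_div_iff₀ hd).mp h1
    nlinarith
  have hfa : Tendsto (fun x : ℝ => f (x/2) / f x) (𝓝[>] (0:ℝ)) (𝓝 ((2:ℝ)⁻¹ ^ rho)) :=
    half_ratio_tendsto_aux f L rho hLpos hLsv hU hfpos
  have hgb : Tendsto (fun x : ℝ => g (x/2) / g x) (𝓝[>] (0:ℝ)) (𝓝 ((2:ℝ)⁻¹ ^ rhoh)) :=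
    half_ratio_tendsto_aux g Lh rhoh hLhpos hLhsv hUh hgpos
  have hab : (2:ℝ)⁻¹ ^ rho < (2:ℝ)⁻¹ ^ rhoh :=
    Real.rpow_lt_rpow_of_exponent_gt (by norm_num) (by norm_num) hlt
  have hfg : Tendsto (fun x : ℝ => f x / g x) (𝓝[>] (0:ℝ)) (𝓝 0) :=
    ratio_tendsto_zero_aux f g hfmono hgmono _ _
      (Real.rpow_pos_of_pos (by norm_num) rho) hab hfa hgb hfpos hgpos
  have hIf : Tendsto (fun x : ℝ =>
      (∫ y in Set.Icc 0 x, Real.exp ((alpha - beta) * y) ∂U) / f x)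
      (𝓝[>] (0:ℝ)) (𝓝 1) :=
    integral_ratio_tendsto_one_aux U (alpha - beta) hfpos
  have hIg : Tendsto (fun x : ℝ =>
      (∫ y in Set.Icc 0 x, Real.exp ((alphah - betah) * y) ∂Uh) / g x)
      (𝓝[>] (0:ℝ)) (𝓝 1) :=
    integral_ratio_tendsto_one_aux Uh (alphah - betah) hgpos
  have hPsiD : Tendsto (fun x : ℝ => Psi x / (x ^ rhoh * Lh x)) (𝓝[>] (0:ℝ)) (𝓝 0) := by
    have hbig : Tendsto (fun x : ℝ =>
        C * ((∫ y in Set.Icc 0 x, Real.exp ((alpha - beta) * y) ∂U) / f x) *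
          (f x / g x) * (g x / (x ^ rhoh * Lh x)))
        (𝓝[>] (0:ℝ)) (𝓝 (C * 1 * 0 * 1)) :=
      ((tendsto_const_nhds.mul hIf).mul hfg).mul hUh
    rw [mul_one, mul_zero] at hbig
    apply hbig.congr'
    filter_upwards [hfpos, hgpos, self_mem_nhdsWithin] with x hfx hgx hx
    rw [Set.mem_Ioi] at hx
    have hd := hDhpos x hx
    rw [hPsi x]
    field_simp
  have hPsihD : Tendsto (fun x : ℝ => Psih x / (x ^ rhoh * Lh x)) (𝓝[>] (0:ℝ)) (𝓝 Ch) := by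
    have hbig : Tendsto (fun x : ℝ =>
        Ch * ((∫ y in Set.Icc 0 x, Real.exp ((alphah - betah) * y) ∂Uh) / g x) *
          (g x / (x ^ rhoh * Lh x)))
        (𝓝[>] (0:ℝ)) (𝓝 (Ch * 1 * 1)) :=
      (tendsto_const_nhds.mul hIg).mul hUh
    rw [mul_one, mul_one] at hbig
    apply hbig.congr'
    filter_upwards [hgpos, self_mem_nhdsWithin] with x hgx hx
    rw [Set.mem_Ioi] at hx
    have hd := hDhpos x hx
    rw [hPsih x]
    field_simp
  have hfin := hPsiD.sub hPsihD
  rw [zero_sub] at hfin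
  apply hfin.congr
  intro x
  rw [sub_div]
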